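/- For every δ ∈ (0, 1/3) there exists a constant C > 0, depending only on δ, such that for all f ∈ ℝ with √(1/3 + δ) ≤ f ≤ 1, all a ∈ ℝ³ with |a|² ≤ f² - 1/3 - δ, and all g ∈ ℝ, b ∈ ℝ³: |f b + 2 g a|² + (3 f² - 3|a|² - 1) g² ≥ C (g² + |b|²). -/

import Mathlib

/-- Uniform coercivity of the second-variation quadratic form on `K_δ¹`. -/
theorem stmt9 (δ : ℝ) (hδ : δ ∈ Set.Ioo (0:ℝ) (1/3)) :
    ∃ C > 0, ∀ (f : ℝ) (a : EuclideanSpace ℝ (Fin 3)) (g : ℝ)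
      (b : EuclideanSpace ℝ (Fin 3)),
      Real.sqrt (1/3 + δ) ≤ f → f ≤ 1 → ‖a‖^2 ≤ f^2 - 1/3 - δ →
      C * (g^2 + ‖b‖^2) ≤ ‖f • b + (2*g) • a‖^2 + (3*f^2 - 3*‖a‖^2 - 1) * g^2 := by
  obtain ⟨hδ0, hδ1⟩ := hδ
  have hpos : (0:ℝ) < 16 + 9*δ := by linarith
  refine ⟨3*δ/(16+9*δ), by positivity, ?_⟩
  intro f a g b hf1 hf2 ha
  have hf0 : 0 ≤ f := le_trans (Real.sqrt_nonneg _) hf1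
  have hf2' : 1/3 + δ ≤ f^2 := by
    have h := Real.sq_sqrt (by linarith : (0:ℝ) ≤ 1/3 + δ)
    nlinarith [Real.sqrt_nonneg (1/3+δ)]
  have hA : ‖a‖^2 ≤ 2/3 - δ := by nlinarith
  have hexp : ‖f • b + (2*g) • a‖^2
      = f^2*‖b‖^2 + 4*(f*g*(inner ℝ b a : ℝ)) + 4*g^2*‖a‖^2 := by
    rw [norm_add_sq_real, norm_smul, norm_smul, real_inner_smul_left,
      real_inner_smul_right]
    simp [abs_mul, mul_pow, sq_abs]
    ring
  have h1 : -(f* |g| * (‖b‖*‖a‖)) ≤ f*g*(inner ℝ b a : ℝ) := by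
    have hI : |(inner ℝ b a : ℝ)| ≤ ‖b‖ * ‖a‖ := abs_real_inner_le_norm b a
    have habs : |f*g*(inner ℝ b a : ℝ)| ≤ f* |g| * (‖b‖*‖a‖) := by
      rw [abs_mul, abs_mul, abs_of_nonneg hf0]
      have := abs_nonneg (g)
      gcongr
    linarith [neg_abs_le (f*g*(inner ℝ b a : ℝ))]
  have key : -(256*f^2*‖b‖^2 + 4*(16+9*δ)^2*‖a‖^2*g^2)
      ≤ 64*(16+9*δ)*(f*g*(inner ℝ b a : ℝ)) := by
    have hg : |g|^2 = g^2 := sq_abs g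
    have e : (16*f*‖b‖ - 2*(16+9*δ)*‖a‖*|g|)^2
        = 256*f^2*‖b‖^2 - 64*(16+9*δ)*(f*|g| * (‖b‖*‖a‖)) + 4*(16+9*δ)^2*‖a‖^2*g^2 := by
      rw [← hg]; ring
    nlinarith [e ▸ sq_nonneg (16*f*‖b‖ - 2*(16+9*δ)*‖a‖*|g|),
      mul_le_mul_of_nonneg_left h1 (by linarith : (0:ℝ) ≤ 64*(16+9*δ))]
  rw [div_mul_eq_mul_div, div_le_iff₀ hpos, hexp]
  have hfsq : f^2 ≤ 1 := by nlinarith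
  nlinarith [key, sq_nonneg g, sq_nonneg ‖b‖, sq_nonneg (δ*g), sq_nonneg (δ*‖b‖),
    mul_le_mul_of_nonneg_right hf2' (mul_nonneg hδ0.le (sq_nonneg ‖b‖)),
    mul_le_mul_of_nonneg_right ha (sq_nonneg g),
    mul_le_mul_of_nonneg_right ha (mul_nonneg hδ0.le (sq_nonneg g)),
    mul_le_mul_of_nonneg_right ha (mul_nonneg (mul_nonneg hδ0.le hδ0.le) (sq_nonneg g)),
    mul_le_mul_of_nonneg_right hfsq (mul_nonneg hδ0.le (sq_nonneg g)),
    mul_le_mul_of_nonneg_right hfsq (mul_nonneg (mul_nonneg hδ0.le hδ0.le) (sq_nonneg g))]
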